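/- Let N : ℕ and let U₁, U₂ be unitary complex matrices indexed by (Fin N → ZMod 2). Suppose there exist functions g⁽¹⁾, a⁽¹⁾, g⁽²⁾, a⁽²⁾ : Fin N → ℕ and matrices D⁽¹⁾, F⁽¹⁾, B⁽¹⁾, C⁽¹⁾, D⁽²⁾, F⁽²⁾, B⁽²⁾, C⁽²⁾ : Matrix (Fin N) (Fin N) (ZMod 2) such that for every n : Fin N, U₁ᴴ · W(δₙ, 0) · U₁ = i^{g⁽¹⁾ₙ} · W(D⁽¹⁾ₙ, F⁽¹⁾ₙ), U₁ᴴ · W(0, δₙ) · U₁ = i^{a⁽¹⁾ₙ} · W(B⁽¹⁾ₙ, C⁽¹⁾ₙ), and similarly for U₂, where D⁽ⁱ⁾ₙ denotes the n-th row of D⁽ⁱ⁾ and δₙ the indicator vector of n. Then, setting U = U₂ · U₁, for every n : Fin N there exist s, s' : ℕ such that Uᴴ · W(δₙ, 0) · U = i^{s} · W((D⁽²⁾D⁽¹⁾ + F⁽²⁾B⁽¹⁾)ₙ, (D⁽²⁾F⁽¹⁾ + F⁽²⁾C⁽¹⁾)ₙ) and Uᴴ · W(0, δₙ) · U = i^{s'}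 · W((B⁽²⁾D⁽¹⁾ + C⁽²⁾B⁽¹⁾)ₙ, (B⁽²⁾F⁽¹⁾ + C⁽²⁾C⁽¹⁾)ₙ), where the matrix products and sums are taken over ZMod 2. -/

import Mathlib

open Matrix

/-- Pauli-string (Weyl) operator `W(x,z) = ∏ₖ Xₖ^{xₖ} Zₖ^{zₖ}`:
the matrix with entries `W(x,z) a b = (−1)^{z·b}` if `a = b + x` and `0` otherwise.
`W(δₙ, 0)` is the Pauli `Xₙ` operator and `W(0, δₙ)` is the Pauli `Zₙ` operator. -/
def pauliW (N : ℕ) (x z : Fin N → ZMod 2) :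
    Matrix (Fin N → ZMod 2) (Fin N → ZMod 2) ℂ :=
  fun a b => if a = b + x then (if (∑ k, z k * b k) = (0 : ZMod 2) then 1 else -1) else 0

/-- sign helper -/
noncomputable def psgn (c : ZMod 2) : ℂ := if c = 0 then 1 else -1

lemma zmod2_cases : ∀ c : ZMod 2, c = 0 ∨ c = 1 := by decide

lemma psgn_add (c d : ZMod 2) : psgn (c + d) = psgn c * psgn d := by
  have h2 : ((1 : ZMod 2) + 1) = 0 := by decide
  have h1 : ((1 : ZMod 2) ≠ 0) := by decide
  rcases zmod2_cases c with rfl | rfl <;> rcases zmod2_cases d with rfl | rfl <;>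
    simp [psgn, h2, h1]

lemma psgn_eq_pow (c : ZMod 2) : ∃ t : ℕ, psgn c = Complex.I ^ t := by
  rcases zmod2_cases c with rfl | rfl
  · exact ⟨0, by simp [psgn]⟩
  · exact ⟨2, by simp [psgn, Complex.I_sq]⟩

lemma pauliW_apply (N : ℕ) (x z a b : Fin N → ZMod 2) :
    pauliW N x z a b = if a = b + x then psgn (∑ k, z k * b k) else 0 := rfl

lemma pauliW_mul (N : ℕ) (x z x' z' : Fin N → ZMod 2) :
    pauliW N x z * pauliW N x' z'
      = psgn (∑ k, z k * x' k) • pauliW N (x + x') (z + z') := by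
  ext a b
  simp only [Matrix.mul_apply, Matrix.smul_apply, smul_eq_mul]
  rw [Finset.sum_eq_single (b + x')]
  · simp only [pauliW_apply]
    have hcond : (a = b + x' + x) ↔ (a = b + (x + x')) := by
      constructor <;> intro h <;> rw [h] <;> abel
    by_cases h : a = b + (x + x')
    · have h' : a = b + x' + x := hcond.mpr h
      rw [if_pos h', if_pos h]
      simp only [eq_self_iff_true, if_true]
      have h1 : (∑ k, z k * (b + x') k) = (∑ k, z k * b k) + ∑ k, z k * x' k := by
        simp [Pi.add_apply, mul_add, Finset.sum_add_distrib]
      have h2 : (∑ k, (z + z') k * b k) = (∑ k, z k * b k) + ∑ k, z' k * b k := by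
        simp [Pi.add_apply, add_mul, Finset.sum_add_distrib]
      rw [h1, h2, psgn_add, psgn_add]
      ring
    · rw [if_neg (fun hh => h (hcond.mp hh)), if_neg h, zero_mul, mul_zero]
  · intro c _ hc
    have : pauliW N x' z' c b = 0 := by
      rw [pauliW_apply, if_neg hc]
    rw [this, mul_zero]
  · intro h; exact absurd (Finset.mem_univ _) h

lemma pauliW_zero_zero (N : ℕ) : pauliW N 0 0 = 1 := by
  ext a b
  simp [pauliW_apply, Matrix.one_apply, psgn, eq_comm]

/-- extract a phase -/
lemma ipow_extract {α : Type*} [AddCommMonoid α] [Module ℂ α]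
    {A B : α} (t m : ℕ) (h : Complex.I ^ t • A = Complex.I ^ m • B) :
    ∃ s : ℕ, A = Complex.I ^ s • B := by
  refine ⟨m + (4 - t % 4), ?_⟩
  have hI : Complex.I ^ (4 - t % 4) * Complex.I ^ t = 1 := by
    rw [← pow_add]
    have : 4 - t % 4 + t = 4 * (t / 4 + 1) := by omega
    rw [this, pow_mul, Complex.I_pow_four, one_pow]
  calc A = (Complex.I ^ (4 - t % 4) * Complex.I ^ t) • A := by rw [hI, one_smul]
    _ = Complex.I ^ (4 - t % 4) • (Complex.I ^ t • A) := by rw [mul_smul]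
    _ = Complex.I ^ (4 - t % 4) • (Complex.I ^ m • B) := by rw [h]
    _ = Complex.I ^ (m + (4 - t % 4)) • B := by rw [smul_smul, ← pow_add, add_comm]

/-- general conjugation lemma -/
lemma conj_pauliW (N : ℕ) (U : Matrix (Fin N → ZMod 2) (Fin N → ZMod 2) ℂ)
    (hU : Uᴴ * U = 1)
    (g a : Fin N → ℕ) (D F B C : Matrix (Fin N) (Fin N) (ZMod 2))
    (hX : ∀ n : Fin N, Uᴴ * pauliW N (Pi.single n 1) 0 * U
        = Complex.I ^ (g n) • pauliW N (D n) (F n))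
    (hZ : ∀ n : Fin N, Uᴴ * pauliW N 0 (Pi.single n 1) * U
        = Complex.I ^ (a n) • pauliW N (B n) (C n)) :
    ∀ x z : Fin N → ZMod 2, ∃ s : ℕ,
      Uᴴ * pauliW N x z * U
        = Complex.I ^ s • pauliW N (x ᵥ* D + z ᵥ* B) (x ᵥ* F + z ᵥ* C) := by
  have hU' : U * Uᴴ = 1 := mul_eq_one_comm.mp hU
  -- goal predicate
  set P : (Fin N → ZMod 2) → (Fin N → ZMod 2) → Prop := fun x z => ∃ s : ℕ,
      Uᴴ * pauliW N x z * U
        = Complex.I ^ s • pauliW N (x ᵥ* D + z ᵥ* B) (x ᵥ* F + z ᵥ* C) with hP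
  have hzero : P 0 0 := by
    refine ⟨0, ?_⟩
    simp [pauliW_zero_zero, hU, Matrix.zero_vecMul, Matrix.mul_one]
  have hcomb : ∀ x z x' z', P x z → P x' z' → P (x + x') (z + z') := by
    rintro x z x' z' ⟨s, hs⟩ ⟨s', hs'⟩
    obtain ⟨t, ht⟩ := psgn_eq_pow (∑ k, z k * x' k)
    obtain ⟨t', ht'⟩ := psgn_eq_pow (∑ k, (x ᵥ* F + z ᵥ* C) k * (x' ᵥ* D + z' ᵥ* B) k)
    have key : Complex.I ^ t • (Uᴴ * pauliW N (x + x') (z + z') * U)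
        = (Uᴴ * pauliW N x z * U) * (Uᴴ * pauliW N x' z' * U) := by
      have : (Uᴴ * pauliW N x z * U) * (Uᴴ * pauliW N x' z' * U)
          = Uᴴ * (pauliW N x z * pauliW N x' z') * U := by
        have e : (Uᴴ * pauliW N x z * U) * (Uᴴ * pauliW N x' z' * U)
            = Uᴴ * pauliW N x z * (U * Uᴴ) * pauliW N x' z' * U := by
          noncomm_ring
        rw [e, hU']
        noncomm_ring
      rw [this, pauliW_mul, ← ht, Matrix.mul_smul, Matrix.smul_mul]
    rw [hs, hs', Matrix.smul_mul, Matrix.mul_smul, smul_smul, ← pow_add,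
      pauliW_mul, ht', smul_smul, ← pow_add] at key
    have harr : (x ᵥ* D + z ᵥ* B) + (x' ᵥ* D + z' ᵥ* B) = (x + x') ᵥ* D + (z + z') ᵥ* B := by
      rw [Matrix.add_vecMul, Matrix.add_vecMul]; abel
    have harr' : (x ᵥ* F + z ᵥ* C) + (x' ᵥ* F + z' ᵥ* C) = (x + x') ᵥ* F + (z + z') ᵥ* C := by
      rw [Matrix.add_vecMul, Matrix.add_vecMul]; abel
    rw [harr, harr'] at key
    exact ipow_extract t (s + s' + t') key
  have hsingleX : ∀ (n : Fin N) (c : ZMod 2), P (Pi.single n c) 0 := by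
    intro n c
    rcases zmod2_cases c with rfl | rfl
    · rw [Pi.single_zero]; exact hzero
    · refine ⟨g n, ?_⟩
      rw [hX n, Matrix.single_one_vecMul, Matrix.single_one_vecMul, Matrix.zero_vecMul,
        Matrix.zero_vecMul, add_zero, add_zero]
      rfl
  have hsingleZ : ∀ (n : Fin N) (c : ZMod 2), P 0 (Pi.single n c) := by
    intro n c
    rcases zmod2_cases c with rfl | rfl
    · rw [Pi.single_zero]; exact hzero
    · refine ⟨a n, ?_⟩
      rw [hZ n, Matrix.single_one_vecMul, Matrix.single_one_vecMul, Matrix.zero_vecMul,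
        Matrix.zero_vecMul, zero_add, zero_add]
      rfl
  have hsingle : ∀ (n : Fin N) (c d : ZMod 2), P (Pi.single n c) (Pi.single n d) := by
    intro n c d
    have := hcomb _ _ _ _ (hsingleX n c) (hsingleZ n d)
    rwa [add_zero, zero_add] at this
  intro x z
  have hsum : ∀ S : Finset (Fin N),
      P (∑ n ∈ S, Pi.single n (x n)) (∑ n ∈ S, Pi.single n (z n)) := by
    intro S
    induction S using Finset.induction with
    | empty => simpa using hzero
    | insert _ _ hn ih =>
      rw [Finset.sum_insert hn, Finset.sum_insert hn]
      exact hcomb _ _ _ _ (hsingle _ _ _) ih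
  have := hsum Finset.univ
  rwa [Finset.univ_sum_single, Finset.univ_sum_single] at this

lemma row_mul {N : ℕ} (M P : Matrix (Fin N) (Fin N) (ZMod 2)) (n : Fin N) :
    (M * P) n = M n ᵥ* P := by
  funext j
  simp [Matrix.mul_apply, Matrix.vecMul, dotProduct]

lemma row_mul_add {N : ℕ} (M P Q R : Matrix (Fin N) (Fin N) (ZMod 2)) (n : Fin N) :
    (M * P + Q * R) n = M n ᵥ* P + Q n ᵥ* R := by
  funext j
  simp [Matrix.add_apply, row_mul]

/-- Concatenation of Clifford circuits: if `U₁`, `U₂` are unitary with stabilizer tableaux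
`(g⁽ⁱ⁾, a⁽ⁱ⁾, D⁽ⁱ⁾, F⁽ⁱ⁾, B⁽ⁱ⁾, C⁽ⁱ⁾)`, then the tableau of `U₂U₁` has binary part
`D = D⁽²⁾D⁽¹⁾ + F⁽²⁾B⁽¹⁾`, `F = D⁽²⁾F⁽¹⁾ + F⁽²⁾C⁽¹⁾`, `B = B⁽²⁾D⁽¹⁾ + C⁽²⁾B⁽¹⁾`,
`C = B⁽²⁾F⁽¹⁾ + C⁽²⁾C⁽¹⁾` over `ZMod 2`, up to a power-of-`i` phase. -/
theorem clifford_concatenation (N : ℕ)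
    (U₁ U₂ : Matrix (Fin N → ZMod 2) (Fin N → ZMod 2) ℂ)
    (hU₁ : U₁ᴴ * U₁ = 1) (hU₂ : U₂ᴴ * U₂ = 1)
    (g1 a1 g2 a2 : Fin N → ℕ)
    (D1 F1 B1 C1 D2 F2 B2 C2 : Matrix (Fin N) (Fin N) (ZMod 2))
    (h1X : ∀ n : Fin N, U₁ᴴ * pauliW N (Pi.single n 1) 0 * U₁
        = Complex.I ^ (g1 n) • pauliW N (D1 n) (F1 n))
    (h1Z : ∀ n : Fin N, U₁ᴴ * pauliW N 0 (Pi.single n 1) * U₁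
        = Complex.I ^ (a1 n) • pauliW N (B1 n) (C1 n))
    (h2X : ∀ n : Fin N, U₂ᴴ * pauliW N (Pi.single n 1) 0 * U₂
        = Complex.I ^ (g2 n) • pauliW N (D2 n) (F2 n))
    (h2Z : ∀ n : Fin N, U₂ᴴ * pauliW N 0 (Pi.single n 1) * U₂
        = Complex.I ^ (a2 n) • pauliW N (B2 n) (C2 n)) :
    ∀ n : Fin N, ∃ s s' : ℕ,
      (U₂ * U₁)ᴴ * pauliW N (Pi.single n 1) 0 * (U₂ * U₁)
          = Complex.I ^ s • pauliW N ((D2 * D1 + F2 * B1) n) ((D2 * F1 + F2 * C1) n) ∧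
        (U₂ * U₁)ᴴ * pauliW N 0 (Pi.single n 1) * (U₂ * U₁)
          = Complex.I ^ s' • pauliW N ((B2 * D1 + C2 * B1) n) ((B2 * F1 + C2 * C1) n) := by
  intro n
  have main := conj_pauliW N U₁ hU₁ g1 a1 D1 F1 B1 C1 h1X h1Z
  have assoc : ∀ M : Matrix (Fin N → ZMod 2) (Fin N → ZMod 2) ℂ,
      (U₂ * U₁)ᴴ * M * (U₂ * U₁) = U₁ᴴ * (U₂ᴴ * M * U₂) * U₁ := by
    intro M
    rw [Matrix.conjTranspose_mul]
    noncomm_ring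
  obtain ⟨s, hs⟩ := main (D2 n) (F2 n)
  obtain ⟨s', hs'⟩ := main (B2 n) (C2 n)
  refine ⟨g2 n + s, a2 n + s', ?_, ?_⟩
  · rw [assoc, h2X n, Matrix.mul_smul, Matrix.smul_mul, hs, smul_smul, ← pow_add,
      row_mul_add D2 D1 F2 B1 n, row_mul_add D2 F1 F2 C1 n]
  · rw [assoc, h2Z n, Matrix.mul_smul, Matrix.smul_mul, hs', smul_smul, ← pow_add,
      row_mul_add B2 D1 C2 B1 n, row_mul_add B2 F1 C2 C1 n]
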